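/- For every ε with 0 < ε < 1/100 there exists an integer N such that for all n ≥ N and all integers m, p with 5 ≤ m ≤ ε^2·n and m ≤ p ≤ n − 1, one has R_m(p,n) < (5/8)^n · (1 + ε)^n. -/

import Mathlib

open scoped Classical

noncomputable section

/-- The `{±1}`-vector in `ℝ^n` encoded by a Boolean vector. -/
def signVec {n : ℕ} (u : Fin n → Bool) : Fin n → ℝ := fun i => if u i then 1 else -1

/-- `v` is a `{±1}`-vector: all coordinates lie in `{-1, 1}`. -/
def IsPM {n : ℕ} (v : Fin n → ℝ) : Prop := ∀ i, v i = 1 ∨ v i = -1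

/-- The real span of the `{±1}`-vectors encoded by `W` contains a `{±1}`-vector different
from `±(W j)` for all `j`. -/
def KSOEvent {p n : ℕ} (W : Fin p → Fin n → Bool) : Prop :=
  ∃ x : Fin n → ℝ,
    x ∈ Submodule.span ℝ (Set.range fun j => signVec (W j)) ∧ IsPM x ∧
    ∀ j, x ≠ signVec (W j) ∧ x ≠ -signVec (W j)

/-- `ℙ(p, n)`: the probability that the real span of `p` uniformly random `{±1}`-vectors
in `ℝ^n` contains a `{±1}`-vector different from `±v_1, …, ±v_p`. -/
def probKSO (p n : ℕ) : ℝ :=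
  ((Finset.univ.filter fun W : Fin p → Fin n → Bool => KSOEvent W).card : ℝ) / 2 ^ (p * n)

/-- Some three of the vectors encoded by `W` have a real linear combination that is a
`{±1}`-vector different from `±` those three vectors. -/
def P3Event {p n : ℕ} (W : Fin p → Fin n → Bool) : Prop :=
  ∃ j₁ j₂ j₃ : Fin p, j₁ ≠ j₂ ∧ j₁ ≠ j₃ ∧ j₂ ≠ j₃ ∧
    ∃ a b c : ℝ, ∃ x : Fin n → ℝ,
      x = a • signVec (W j₁) + b • signVec (W j₂) + c • signVec (W j₃) ∧ IsPM x ∧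
      (x ≠ signVec (W j₁) ∧ x ≠ -signVec (W j₁)) ∧
      (x ≠ signVec (W j₂) ∧ x ≠ -signVec (W j₂)) ∧
      (x ≠ signVec (W j₃) ∧ x ≠ -signVec (W j₃))

/-- `ℙ₃(p, n)`: the probability of `P3Event` for `p` uniformly random `{±1}`-vectors in `ℝ^n`. -/
def probP3 (p n : ℕ) : ℝ :=
  ((Finset.univ.filter fun W : Fin p → Fin n → Bool => P3Event W).card : ℝ) / 2 ^ (p * n)

/-- Some `m` of the vectors encoded by `W` have a linear combination with all coefficients
nonzero that is a `{±1}`-vector. -/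
def PmEvent (m : ℕ) {p n : ℕ} (W : Fin p → Fin n → Bool) : Prop :=
  ∃ j : Fin m → Fin p, Function.Injective j ∧
    ∃ α : Fin m → ℝ, (∀ i, α i ≠ 0) ∧ IsPM (∑ i, α i • signVec (W (j i)))

/-- `ℙ_m(p, n)`: the probability of `PmEvent m` for `p` uniformly random `{±1}`-vectors
in `ℝ^n`. -/
def probPm (m p n : ℕ) : ℝ :=
  ((Finset.univ.filter fun W : Fin p → Fin n → Bool => PmEvent m W).card : ℝ) / 2 ^ (p * n)

/-- `𝓜_m(p, n)`: the set of `p × n` `{±1}`-matrices (encoded row-wise by Booleans) with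
linearly independent rows, some `m` of which have a linear combination with nonzero
coefficients that is a `{±1}`-vector. -/
def MmSet (m p n : ℕ) : Finset (Fin p → Fin n → Bool) :=
  Finset.univ.filter fun M =>
    (LinearIndependent ℝ fun i => signVec (M i)) ∧ PmEvent m M

/-- `R_m(p, n) = |𝓜_m(p, n)| / 2^(p n)`. -/
def Rm (m p n : ℕ) : ℝ := ((MmSet m p n).card : ℝ) / 2 ^ (p * n)

/-- `ℙ_{p,n}`: the probability that a uniformly random `p × n` `{±1}`-matrix has rank
less than `p`, i.e. its rows are linearly dependent over `ℝ`. -/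
def probSingular (p n : ℕ) : ℝ :=
  ((Finset.univ.filter fun M : Fin p → Fin n → Bool =>
      ¬ LinearIndependent ℝ fun i => signVec (M i)).card : ℝ) / 2 ^ (p * n)

/-- The vector `(1, b_1, …, b_n) ∈ E_n ⊂ ℝ^{n+1}` encoded by a Boolean vector. -/
def eVec {n : ℕ} (u : Fin n → Bool) : Fin (n + 1) → ℝ := Fin.cons 1 (signVec u)

/-- The number of ordered `n`-tuples of distinct, linearly independent vectors from `E_n`
whose real span contains a `{±1}`-vector of `ℝ^{n+1}` different from `±w_1, …, ±w_n`. -/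
def KSOECard (n : ℕ) : ℕ :=
  (Finset.univ.filter fun W : Fin n → (Fin n → Bool) =>
    Function.Injective W ∧ (LinearIndependent ℝ fun i => eVec (W i)) ∧
    ∃ x : Fin (n + 1) → ℝ,
      x ∈ Submodule.span ℝ (Set.range fun i => eVec (W i)) ∧ IsPM x ∧
      ∀ i, x ≠ eVec (W i) ∧ x ≠ -eVec (W i)).card

/-- `P(2, n)`: the number of threshold functions of `n` variables. -/
def numThreshold (n : ℕ) : ℕ :=
  (Finset.univ.filter fun f : (Fin n → Bool) → Bool =>
    ∃ a : ℝ, ∃ w : Fin n → ℝ,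
      ∀ x, f x = true ↔ 0 < a + ∑ i, w i * signVec x i).card

section Aux
open Finset

lemma auxAntichainCard {m : ℕ} {β : Fin m → ℝ} (hβ : ∀ i, 0 < β i) (t : ℝ) :
    (univ.filter fun A : Finset (Fin m) => ∑ i ∈ A, β i = t).card ≤ m.choose (m / 2) := by
  have hanti : IsAntichain (· ⊆ ·)
      ((univ.filter fun A : Finset (Fin m) => ∑ i ∈ A, β i = t) : Set (Finset (Fin m))) := by
    intro A hA B hB hne hsub
    simp only [Finset.coe_filter, Set.mem_setOf_eq, Finset.mem_univ, true_and] at hA hB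
    have hBA : (B \ A).Nonempty := by
      rw [Finset.sdiff_nonempty]
      intro h
      exact hne (Finset.Subset.antisymm hsub h)
    have hpos : 0 < ∑ i ∈ B \ A, β i :=
      Finset.sum_pos (fun i _ => hβ i) hBA
    have hsum : ∑ i ∈ B \ A, β i + ∑ i ∈ A, β i = ∑ i ∈ B, β i :=
      Finset.sum_sdiff hsub
    rw [hA, hB] at hsum
    linarith
  simpa using IsAntichain.sperner hanti

lemma auxELOsingle {m : ℕ} {α : Fin m → ℝ} (hα : ∀ i, α i ≠ 0) (t : ℝ) :
    (univ.filter fun A : Finset (Fin m) => ∑ i ∈ A, α i = t).card ≤ m.choose (m / 2) := by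
  set N : Finset (Fin m) := univ.filter fun i => α i < 0 with hN
  set β : Fin m → ℝ := fun i => |α i| with hβdef
  have hβ : ∀ i, 0 < β i := fun i => abs_pos.2 (hα i)
  have key : ∀ A : Finset (Fin m), ∑ i ∈ symmDiff A N, β i = (∑ i ∈ A, α i) + ∑ i ∈ N, β i := by
    intro A
    have hdisj : Disjoint (A \ N) (N \ A) := disjoint_sdiff_sdiff
    have h1 : symmDiff A N = (A \ N) ∪ (N \ A) := rfl
    rw [h1, Finset.sum_union hdisj]
    have e1 : ∑ i ∈ A \ N, β i = ∑ i ∈ A \ N, α i := by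
      refine Finset.sum_congr rfl fun i hi => ?_
      have : ¬ α i < 0 := by
        have := (Finset.mem_sdiff.1 hi).2
        simpa [hN] using this
      exact abs_of_nonneg (le_of_not_gt this)
    have e2 : ∑ i ∈ N \ A, β i = ∑ i ∈ N, β i - ∑ i ∈ N ∩ A, β i := by
      have : N \ A = N \ (N ∩ A) := by rw [Finset.sdiff_inter_self_left]
      rw [this, Finset.sum_sdiff_eq_sub Finset.inter_subset_left]
    have e3 : ∑ i ∈ N ∩ A, β i = -∑ i ∈ N ∩ A, α i := by
      rw [← Finset.sum_neg_distrib]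
      refine Finset.sum_congr rfl fun i hi => ?_
      have : α i < 0 := by
        have := (Finset.mem_inter.1 hi).1
        simpa [hN] using this
      exact abs_of_neg this
    have e4 : ∑ i ∈ A, α i = ∑ i ∈ A \ N, α i + ∑ i ∈ A ∩ N, α i := by
      have h := Finset.sum_sdiff (f := α) (Finset.inter_subset_left (s₁ := A) (s₂ := N))
      rw [Finset.sdiff_inter_self_left] at h
      linarith
    have e5 : A ∩ N = N ∩ A := Finset.inter_comm A N
    rw [e1, e2, e3, e4, e5]
    ring
  have hcard : (univ.filter fun A : Finset (Fin m) => ∑ i ∈ A, α i = t).card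
      = (univ.filter fun A : Finset (Fin m) => ∑ i ∈ A, β i = t + ∑ i ∈ N, β i).card := by
    refine Finset.card_nbij' (fun A => symmDiff A N) (fun B => symmDiff B N) ?_ ?_ ?_ ?_
    · intro A hA
      simp only [Finset.mem_coe, Finset.mem_filter, Finset.mem_univ, true_and] at hA ⊢
      rw [key A, hA]
    · intro B hB
      simp only [Finset.mem_coe, Finset.mem_filter, Finset.mem_univ, true_and] at hB ⊢
      have := key (symmDiff B N)
      rw [symmDiff_symmDiff_cancel_right] at this
      linarith
    · intro A _; exact symmDiff_symmDiff_cancel_right N A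
    · intro B _; exact symmDiff_symmDiff_cancel_right N B
  rw [hcard]
  exact auxAntichainCard hβ _

lemma auxSumSign {m : ℕ} (α : Fin m → ℝ) (ε : Fin m → Bool) :
    (∑ i, α i * signVec ε i)
      = (∑ i ∈ univ.filter (fun i => ε i = true), 2 * α i) - ∑ i, α i := by
  have hsplit1 : (∑ i, α i * signVec ε i)
      = ∑ i ∈ univ.filter (fun i => ε i = true), α i * signVec ε i
        + ∑ i ∈ univ.filter (fun i => ¬ ε i = true), α i * signVec ε i :=
    (Finset.sum_filter_add_sum_filter_not univ _ _).symm
  have hsplit2 : (∑ i, α i)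
      = ∑ i ∈ univ.filter (fun i => ε i = true), α i
        + ∑ i ∈ univ.filter (fun i => ¬ ε i = true), α i :=
    (Finset.sum_filter_add_sum_filter_not univ _ _).symm
  have h1 : ∑ i ∈ univ.filter (fun i => ε i = true), α i * signVec ε i
      = ∑ i ∈ univ.filter (fun i => ε i = true), α i := by
    refine Finset.sum_congr rfl fun i hi => ?_
    have := (Finset.mem_filter.1 hi).2
    simp [signVec, this]
  have h2 : ∑ i ∈ univ.filter (fun i => ¬ ε i = true), α i * signVec ε i
      = -∑ i ∈ univ.filter (fun i => ¬ ε i = true), α i := by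
    rw [← Finset.sum_neg_distrib]
    refine Finset.sum_congr rfl fun i hi => ?_
    have := (Finset.mem_filter.1 hi).2
    simp [signVec, this]
  have h3 : ∑ i ∈ univ.filter (fun i => ε i = true), 2 * α i
      = ∑ i ∈ univ.filter (fun i => ε i = true), α i
        + ∑ i ∈ univ.filter (fun i => ε i = true), α i := by
    rw [← Finset.sum_add_distrib]
    exact Finset.sum_congr rfl fun i _ => two_mul _
  rw [hsplit1, h1, h2, h3, hsplit2]
  ring

lemma auxELOtarget {m : ℕ} {α : Fin m → ℝ} (hα : ∀ i, α i ≠ 0) (t : ℝ) :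
    (univ.filter fun ε : Fin m → Bool => (∑ i, α i * signVec ε i) = t).card
      ≤ m.choose (m / 2) := by
  have hα2 : ∀ i, (2:ℝ) * α i ≠ 0 := fun i => by
    have := hα i; intro h; apply this; linarith
  have hcard : (univ.filter fun ε : Fin m → Bool => (∑ i, α i * signVec ε i) = t).card
      = (univ.filter fun A : Finset (Fin m) =>
          ∑ i ∈ A, 2 * α i = t + ∑ i, α i).card := by
    refine Finset.card_nbij' (fun ε => univ.filter (fun i => ε i = true))
      (fun A => fun i => decide (i ∈ A)) ?_ ?_ ?_ ?_
    · intro ε hε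
      simp only [Finset.mem_coe, Finset.mem_filter, Finset.mem_univ, true_and] at hε ⊢
      rw [← hε, auxSumSign]; ring
    · intro A hA
      simp only [Finset.mem_coe, Finset.mem_filter, Finset.mem_univ, true_and] at hA ⊢
      rw [auxSumSign]
      have : (univ.filter fun i => (decide (i ∈ A)) = true) = A := by
        ext i; simp
      rw [this, hA]; ring
    · intro ε _
      funext i
      simp
    · intro A _
      ext i; simp
  rw [hcard]
  exact auxELOsingle hα2 _

lemma auxELOpm {m : ℕ} {α : Fin m → ℝ} (hα : ∀ i, α i ≠ 0) :
    (univ.filter fun ε : Fin m → Bool =>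
      (∑ i, α i * signVec ε i) = 1 ∨ (∑ i, α i * signVec ε i) = -1).card
      ≤ 2 * m.choose (m / 2) := by
  have hsub : (univ.filter fun ε : Fin m → Bool =>
      (∑ i, α i * signVec ε i) = 1 ∨ (∑ i, α i * signVec ε i) = -1)
      ⊆ (univ.filter fun ε : Fin m → Bool => (∑ i, α i * signVec ε i) = 1)
        ∪ (univ.filter fun ε : Fin m → Bool => (∑ i, α i * signVec ε i) = -1) := by
    intro ε hε
    simp only [Finset.mem_filter, Finset.mem_univ, true_and, Finset.mem_union] at hε ⊢
    tauto
  calc _ ≤ _ := Finset.card_le_card hsub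
    _ ≤ _ := Finset.card_union_le _ _
    _ ≤ 2 * m.choose (m / 2) := by
      have := auxELOtarget hα (1:ℝ)
      have := auxELOtarget hα (-1:ℝ)
      omega

lemma auxSqLe {x y : ℝ} (hx : 0 ≤ x) (hy : 0 ≤ y) (h : x ^ 2 ≤ y ^ 2) : x ≤ y := by
  nlinarith

lemma auxCentralBinomSqrt (k : ℕ) :
    (Nat.centralBinom k : ℝ) * Real.sqrt (2 * k + 1) ≤ 4 ^ k := by
  induction k with
  | zero => simp [Nat.centralBinom]
  | succ k ih =>
    have hrec : ((k : ℝ) + 1) * (Nat.centralBinom (k + 1) : ℝ)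
        = 2 * (2 * k + 1) * (Nat.centralBinom k : ℝ) := by
      have := Nat.succ_mul_centralBinom_succ k
      exact_mod_cast congrArg (fun x : ℕ => (x : ℝ)) this
    set a : ℝ := Real.sqrt (2 * k + 1) with ha
    set b : ℝ := Real.sqrt (2 * (k+1) + 1) with hb
    have ha0 : 0 ≤ a := Real.sqrt_nonneg _
    have hb0 : 0 ≤ b := Real.sqrt_nonneg _
    have ha2 : a ^ 2 = 2 * k + 1 := Real.sq_sqrt (by positivity)
    have hb2 : b ^ 2 = 2 * (k+1) + 1 := Real.sq_sqrt (by positivity)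
    have key : 2 * (2 * (k:ℝ) + 1) * b ≤ 4 * ((k:ℝ) + 1) * a := by
      apply auxSqLe (by positivity) (by positivity)
      have h1 : (2 * (2 * (k:ℝ) + 1) * b) ^ 2 = 4 * (2*k+1)^2 * (2*k+3) := by
        rw [mul_pow, mul_pow, hb2]; ring
      have h2 : (4 * ((k:ℝ) + 1) * a) ^ 2 = 16 * (k+1)^2 * (2*k+1) := by
        rw [mul_pow, mul_pow, ha2]; ring
      rw [h1, h2]; nlinarith [sq_nonneg ((k:ℝ))]
    have hcb0 : (0:ℝ) ≤ (Nat.centralBinom k : ℝ) := by positivity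
    have hk1 : (0:ℝ) < (k:ℝ) + 1 := by positivity
    have main : ((k:ℝ) + 1) * ((Nat.centralBinom (k+1) : ℝ) * b) ≤ ((k:ℝ)+1) * 4 ^ (k+1) := by
      calc ((k:ℝ) + 1) * ((Nat.centralBinom (k+1) : ℝ) * b)
          = (2 * (2 * (k:ℝ) + 1) * b) * (Nat.centralBinom k : ℝ) := by
            rw [← mul_assoc, hrec]; ring
        _ ≤ (4 * ((k:ℝ) + 1) * a) * (Nat.centralBinom k : ℝ) :=
            mul_le_mul_of_nonneg_right key hcb0
        _ = 4 * ((k:ℝ)+1) * ((Nat.centralBinom k : ℝ) * a) := by ring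
        _ ≤ 4 * ((k:ℝ)+1) * 4 ^ k := by
            apply mul_le_mul_of_nonneg_left ih (by positivity)
        _ = ((k:ℝ)+1) * 4 ^ (k+1) := by ring
    have hfin := le_of_mul_le_mul_left main hk1
    have hcast : ((k+1:ℕ):ℝ) = (k:ℝ)+1 := by push_cast; ring
    rw [hcast, ← hb]
    exact hfin
  
lemma auxChooseSqrt (m : ℕ) (hm : 1 ≤ m) :
    (Nat.choose m (m / 2) : ℝ) * Real.sqrt m ≤ 2 ^ m := by
  rcases Nat.even_or_odd m with ⟨k, hk⟩ | ⟨k, hk⟩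
  · subst hk
    have h2k : (k + k) / 2 = k := by omega
    have hcb : Nat.choose (k + k) k = Nat.centralBinom k := by
      rw [Nat.centralBinom]; congr 1; omega
    rw [h2k, hcb]
    push_cast
    have hmono : Real.sqrt (k + k) ≤ Real.sqrt (2 * k + 1) :=
      Real.sqrt_le_sqrt (by push_cast; linarith)
    calc (Nat.centralBinom k : ℝ) * Real.sqrt (k + k)
        ≤ (Nat.centralBinom k : ℝ) * Real.sqrt (2 * k + 1) :=
          mul_le_mul_of_nonneg_left hmono (by positivity)
      _ ≤ 4 ^ k := auxCentralBinomSqrt k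
      _ = 2 ^ (k + k) := by
          rw [show (4:ℝ) = 2^2 by norm_num, ← pow_mul]
          congr 1; omega
  · subst hk
    have h2k : (2 * k + 1) / 2 = k := by omega
    rw [h2k]
    have hle : Nat.choose (2 * k + 1) k ≤ 2 * Nat.centralBinom k := by
      rcases Nat.eq_zero_or_pos k with hk0 | hk0
      · subst hk0; simp [Nat.centralBinom]
      · obtain ⟨k', rfl⟩ : ∃ k', k = k' + 1 := ⟨k - 1, by omega⟩
        have hps : Nat.choose (2 * (k' + 1) + 1) (k' + 1)
            = Nat.choose (2 * (k' + 1)) k' + Nat.choose (2 * (k' + 1)) (k' + 1) :=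
          Nat.choose_succ_succ (2 * (k' + 1)) k'
        rw [hps]
        have h1 : Nat.choose (2 * (k' + 1)) (k' + 1) ≤ Nat.centralBinom (k' + 1) := by
          rw [Nat.centralBinom]
        have h2 : Nat.choose (2 * (k' + 1)) k' ≤ Nat.centralBinom (k' + 1) := by
          rw [Nat.centralBinom]
          have hmle := Nat.choose_le_middle k' (2 * (k' + 1))
          have hmid : 2 * (k' + 1) / 2 = k' + 1 := by omega
          rw [hmid] at hmle
          exact hmle
        omega
    push_cast
    calc (Nat.choose (2 * k + 1) k : ℝ) * Real.sqrt (2 * (k:ℝ) + 1)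
        ≤ (2 * Nat.centralBinom k : ℝ) * Real.sqrt (2 * k + 1) := by
          apply mul_le_mul_of_nonneg_right _ (Real.sqrt_nonneg _)
          exact_mod_cast hle
      _ = 2 * ((Nat.centralBinom k : ℝ) * Real.sqrt (2 * k + 1)) := by push_cast; ring
      _ ≤ 2 * 4 ^ k := by
          have := auxCentralBinomSqrt k
          linarith
      _ = 2 ^ (2 * k + 1) := by
          rw [show (4:ℝ) = 2^2 by norm_num, ← pow_mul, pow_succ]
          ring
  
lemma auxChoose58 (m : ℕ) (hm : 5 ≤ m) :
    16 * Nat.choose m (m / 2) ≤ 5 * 2 ^ m := by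
  induction m, hm using Nat.le_induction with
  | base => decide
  | succ m hm ih =>
    have hstep : Nat.choose (m + 1) ((m + 1) / 2) ≤ 2 * Nat.choose m (m / 2) := by
      obtain ⟨j, hj⟩ : ∃ j, (m + 1) / 2 = j + 1 := ⟨(m+1)/2 - 1, by omega⟩
      rw [hj, Nat.choose_succ_succ]
      have h1 : Nat.choose m j ≤ Nat.choose m (m / 2) := Nat.choose_le_middle j m
      have h2 : Nat.choose m j.succ ≤ Nat.choose m (m / 2) := Nat.choose_le_middle _ m
      omega
    calc 16 * Nat.choose (m + 1) ((m+1) / 2) ≤ 16 * (2 * Nat.choose m (m / 2)) := by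
          exact Nat.mul_le_mul_left _ hstep
      _ = 2 * (16 * Nat.choose m (m/2)) := by ring
      _ ≤ 2 * (5 * 2 ^ m) := Nat.mul_le_mul_left _ ih
      _ = 5 * 2 ^ (m + 1) := by ring

/-- `Q` property of an `m × n` matrix. -/
def auxQ (m n : ℕ) (V : Fin m → Fin n → Bool) : Prop :=
  ∃ α : Fin m → ℝ, (∀ i, α i ≠ 0) ∧ IsPM (∑ i, α i • signVec (V i))

def auxQset (m n : ℕ) : Finset (Fin m → Fin n → Bool) := univ.filter (auxQ m n)

/-- Descriptions: a set of columns, column data, and signs. -/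
def auxDescr (m n : ℕ) := Finset (Fin n) × (Fin n → Fin m → Bool) × (Fin n → Bool)

instance auxDescrFintype (m n : ℕ) : Fintype (auxDescr m n) := by
  unfold auxDescr; infer_instance

def auxGood {m n : ℕ} (d : auxDescr m n) : Prop :=
  ∃ α : Fin m → ℝ, (∀ i, α i ≠ 0) ∧
    ∀ k ∈ d.1, (∑ i, α i * signVec (d.2.1 k) i) = (if d.2.2 k then 1 else -1)

def auxAlpha {m n : ℕ} (d : auxDescr m n) : Fin m → ℝ :=
  if h : auxGood d then h.choose else fun _ => 1

lemma auxAlpha_ne {m n : ℕ} (d : auxDescr m n) : ∀ i, auxAlpha d i ≠ 0 := by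
  unfold auxAlpha
  split
  · next h => exact h.choose_spec.1
  · intro i; norm_num

lemma auxAlpha_spec {m n : ℕ} (d : auxDescr m n) (h : auxGood d) :
    ∀ k ∈ d.1, (∑ i, auxAlpha d i * signVec (d.2.1 k) i) = (if d.2.2 k then 1 else -1) := by
  unfold auxAlpha
  rw [dif_pos h]
  exact h.choose_spec.2

def auxT {m n : ℕ} (d : auxDescr m n) : Finset (Fin m → Bool) :=
  univ.filter fun ε =>
    (∑ i, auxAlpha d i * signVec ε i) = 1 ∨ (∑ i, auxAlpha d i * signVec ε i) = -1

def auxFiber {m n : ℕ} (d : auxDescr m n) : Finset (Fin m → Fin n → Bool) :=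
  (Fintype.piFinset fun k =>
    if k ∈ d.1 then ({d.2.1 k} : Finset (Fin m → Bool)) else auxT d).image
      fun c => fun i k => c k i

def auxD (m n r : ℕ) : Finset (auxDescr m n) :=
  (Finset.powersetCard r (univ : Finset (Fin n))).biUnion fun K =>
    ((Fintype.piFinset fun k =>
        if k ∈ K then (univ : Finset (Fin m → Bool)) else {fun _ => false}) ×ˢ
      (Fintype.piFinset fun k => if k ∈ K then (univ : Finset Bool) else {false})).image
        fun gs => (K, gs.1, gs.2)

/-- dot product with `α` as a linear map. -/
def auxDot {m : ℕ} (α : Fin m → ℝ) : (Fin m → ℝ) →ₗ[ℝ] ℝ :=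
  ∑ i, α i • (LinearMap.proj i : (Fin m → ℝ) →ₗ[ℝ] ℝ)

lemma auxDot_apply {m : ℕ} (α v : Fin m → ℝ) : auxDot α v = ∑ i, α i * v i := by
  simp [auxDot]

lemma auxCover {m n : ℕ} (hn : 0 < n) (V : Fin m → Fin n → Bool) (hV : V ∈ auxQset m n) :
    ∃ r ∈ Finset.range (m + 1), ∃ d ∈ auxD m n r, V ∈ auxFiber d := by
  obtain ⟨α, hα, hPM⟩ : auxQ m n V := (Finset.mem_filter.1 hV).2
  set cols : Fin n → (Fin m → ℝ) := fun k => signVec (fun i => V i k) with hcols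
  have hsign : ∀ k, signVec (fun i => V i k) = cols k := fun k => rfl
  have hIsPM : ∀ k, (∑ i, α i * cols k i) = 1 ∨ (∑ i, α i * cols k i) = -1 := by
    intro k
    have h0 := hPM k
    have hco : (∑ i, α i • signVec (V i)) k = ∑ i, α i * cols k i := by
      rw [Finset.sum_apply]
      exact Finset.sum_congr rfl fun i _ => rfl
    rw [hco] at h0
    exact h0
  obtain ⟨b, hb_sub, hb_span, hb_li⟩ := exists_linearIndependent ℝ (Set.range cols)
  have hbfin : b.Finite := Set.Finite.subset (Set.finite_range cols) hb_sub
  set F : (Fin m → ℝ) → Fin n := fun v => if h : ∃ k, cols k = v then h.choose else ⟨0, hn⟩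
    with hF
  have hFspec : ∀ v ∈ Set.range cols, cols (F v) = v := by
    rintro v ⟨k, rfl⟩
    have h : ∃ k', cols k' = cols k := ⟨k, rfl⟩
    simp only [hF, dif_pos h]
    exact h.choose_spec
  set K : Finset (Fin n) := hbfin.toFinset.image F with hK
  have hKcard : K.card ≤ m := by
    have h1 : K.card ≤ hbfin.toFinset.card := Finset.card_image_le
    have hcoe : (hbfin.toFinset : Set (Fin m → ℝ)) = b := hbfin.coe_toFinset
    have hli2 : LinearIndependent ℝ (fun x : (hbfin.toFinset : Finset (Fin m → ℝ)) => (x : Fin m → ℝ)) := by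
      have := hb_li
      rw [← hcoe] at this
      exact this
    have h2 := hli2.finset_card_le_finrank
    rw [Module.finrank_fin_fun] at h2
    omega
  have hb_colsK : b ⊆ cols '' ↑K := by
    intro v hv
    refine ⟨F v, ?_, hFspec v (hb_sub hv)⟩
    simp only [hK, Finset.coe_image, Set.mem_image]
    exact ⟨v, by simpa using hv, rfl⟩
  have hspanK : ∀ k, cols k ∈ Submodule.span ℝ (cols '' ↑K) := by
    intro k
    have h1 : cols k ∈ Submodule.span ℝ (Set.range cols) :=
      Submodule.subset_span (Set.mem_range_self k)
    rw [← hb_span] at h1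
    exact Submodule.span_mono hb_colsK h1
  -- construct the description
  set g : Fin n → Fin m → Bool :=
    fun k => if k ∈ K then (fun i => V i k) else (fun _ => false) with hg
  set s : Fin n → Bool :=
    fun k => if k ∈ K ∧ (∑ i, α i * cols k i) = 1 then true else false with hs
  set d : auxDescr m n := (K, g, s) with hd
  have hgK : ∀ k ∈ K, signVec (g k) = cols k := by
    intro k hk
    have : g k = fun i => V i k := by rw [hg]; simp [hk]
    rw [this]
  have hαeq : ∀ k ∈ K, (∑ i, α i * signVec (g k) i) = (if s k then 1 else -1) := by
    intro k hk
    rw [hgK k hk]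
    rcases hIsPM k with h1 | h1
    · rw [h1, hs]
      simp [hk, h1]
    · rw [h1, hs]
      have : ¬ (k ∈ K ∧ (∑ i, α i * cols k i) = 1) := by
        rintro ⟨-, h2⟩
        rw [h1] at h2; norm_num at h2
      simp only [if_neg this, Bool.false_eq_true, if_false]
  have hGood : auxGood d := ⟨α, hα, hαeq⟩
  refine ⟨K.card, ?_, d, ?_, ?_⟩
  · exact Finset.mem_range.2 (by omega)
  · -- d ∈ auxD m n K.card
    apply Finset.mem_biUnion.2
    refine ⟨K, Finset.mem_powersetCard.2 ⟨Finset.subset_univ _, rfl⟩, ?_⟩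
    apply Finset.mem_image.2
    refine ⟨(g, s), ?_, rfl⟩
    apply Finset.mem_product.2
    constructor
    · apply Fintype.mem_piFinset.2
      intro k
      by_cases hk : k ∈ K
      · simp [hk]
      · have : g k = fun _ => false := by rw [hg]; simp [hk]
        simp [hk, this]
    · apply Fintype.mem_piFinset.2
      intro k
      by_cases hk : k ∈ K
      · simp [hk]
      · have : s k = false := by
          rw [hs]; simp [hk]
        simp [hk, this]
  · -- V ∈ auxFiber d
    apply Finset.mem_image.2
    refine ⟨fun k => fun i => V i k, ?_, rfl⟩
    apply Fintype.mem_piFinset.2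
    intro k
    by_cases hk : k ∈ K
    · have : g k = fun i => V i k := by rw [hg]; simp [hk]
      simp only [hd, hk, if_pos, Finset.mem_singleton]
      rw [this]
    · simp only [hd, hk, if_neg, if_false]
      -- show transposed column is in auxT d
      have hβα : Set.EqOn (auxDot (auxAlpha d)) (auxDot α) (cols '' ↑K) := by
        rintro v ⟨k', hk', rfl⟩
        have h1 := auxAlpha_spec d hGood k' (by exact hk')
        have h2 := hαeq k' hk'
        rw [auxDot_apply, auxDot_apply]
        have hgk' : signVec (g k') = cols k' := hgK k' hk'
        rw [hgk'] at h1 h2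
        rw [h1, h2]
      have hspan := LinearMap.eqOn_span' hβα (hspanK k)
      rw [auxDot_apply, auxDot_apply] at hspan
      apply Finset.mem_filter.2
      refine ⟨Finset.mem_univ _, ?_⟩
      have hsg : signVec (fun i => V i k) = cols k := hsign k
      rw [hsg, hspan]
      exact hIsPM k

lemma auxProdIteMem {n : ℕ} (K : Finset (Fin n)) (a : ℕ) :
    (∏ k, (if k ∈ K then a else 1)) = a ^ K.card := by
  rw [← Finset.prod_filter_mul_prod_filter_not univ (fun k => k ∈ K)]
  have h1 : ∏ k ∈ univ.filter (fun k => k ∈ K), (if k ∈ K then a else 1)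
      = a ^ (univ.filter (fun k => k ∈ K)).card := by
    rw [Finset.prod_congr rfl (fun k hk => ?_), Finset.prod_const]
    simp [(Finset.mem_filter.1 hk).2]
  have h2 : ∏ k ∈ univ.filter (fun k => ¬ k ∈ K), (if k ∈ K then a else 1) = 1 := by
    apply Finset.prod_eq_one
    intro k hk
    simp [(Finset.mem_filter.1 hk).2]
  have h3 : univ.filter (fun k => k ∈ K) = K := by ext k; simp
  rw [h1, h2, h3, mul_one]

lemma auxProdIteNotMem {n : ℕ} (K : Finset (Fin n)) (a : ℕ) :
    (∏ k, (if k ∈ K then 1 else a)) = a ^ (n - K.card) := by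
  rw [← Finset.prod_filter_mul_prod_filter_not univ (fun k => k ∈ K)]
  have h1 : ∏ k ∈ univ.filter (fun k => k ∈ K), (if k ∈ K then 1 else a) = 1 := by
    apply Finset.prod_eq_one
    intro k hk
    simp [(Finset.mem_filter.1 hk).2]
  have h2 : ∏ k ∈ univ.filter (fun k => ¬ k ∈ K), (if k ∈ K then 1 else a)
      = a ^ (univ.filter (fun k => ¬ k ∈ K)).card := by
    rw [Finset.prod_congr rfl (fun k hk => ?_), Finset.prod_const]
    simp [(Finset.mem_filter.1 hk).2]
  have h3 : (univ.filter (fun k => ¬ k ∈ K)).card = n - K.card := by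
    have he : univ.filter (fun k => ¬ k ∈ K) = univ \ K := by ext k; simp
    rw [he, Finset.card_sdiff_of_subset (Finset.subset_univ K)]
    simp
  rw [h1, h2, h3, one_mul]


lemma auxTcard {m n : ℕ} (d : auxDescr m n) :
    (auxT d).card ≤ 2 * m.choose (m / 2) := by
  unfold auxT
  exact auxELOpm (auxAlpha_ne d)

lemma auxFiberCard {m n r : ℕ} (d : auxDescr m n) (hd : d ∈ auxD m n r) :
    (auxFiber d).card ≤ (2 * m.choose (m / 2)) ^ (n - r) := by
  obtain ⟨K, hK, hd2⟩ := Finset.mem_biUnion.1 hd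
  obtain ⟨gs, _, rfl⟩ := Finset.mem_image.1 hd2
  obtain ⟨hKsub, hKcard⟩ := Finset.mem_powersetCard.1 hK
  set L := 2 * m.choose (m / 2) with hL
  calc (auxFiber (K, gs.1, gs.2)).card
      ≤ (Fintype.piFinset fun k =>
          if k ∈ K then ({gs.1 k} : Finset (Fin m → Bool)) else auxT (K, gs.1, gs.2)).card :=
        Finset.card_image_le
    _ = ∏ k, (if k ∈ K then ({gs.1 k} : Finset (Fin m → Bool)) else auxT (K, gs.1, gs.2)).card :=
        Fintype.card_piFinset _
    _ ≤ ∏ k, (if k ∈ K then 1 else L) := by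
        apply Finset.prod_le_prod'
        intro k _
        by_cases hk : k ∈ K
        · simp [hk]
        · simp only [hk, if_false]
          exact auxTcard _
    _ = L ^ (n - r) := by
        rw [auxProdIteNotMem, hKcard]

lemma auxDcard (m n r : ℕ) :
    (auxD m n r).card ≤ n.choose r * (2 ^ (m * r) * 2 ^ r) := by
  unfold auxD
  refine le_trans Finset.card_biUnion_le
    (le_trans (Finset.sum_le_sum (g := fun _ => 2 ^ (m * r) * 2 ^ r) (fun K hK => ?_)) ?_)
  · obtain ⟨-, hKcard⟩ := Finset.mem_powersetCard.1 hK
    refine le_trans Finset.card_image_le ?_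
    rw [Finset.card_product]
    apply Nat.mul_le_mul
    · rw [Fintype.card_piFinset]
      have hc : ∀ k, (if k ∈ K then (univ : Finset (Fin m → Bool))
          else ({fun _ => false} : Finset (Fin m → Bool))).card
          = (if k ∈ K then 2 ^ m else 1) := by
        intro k
        by_cases hk : k ∈ K <;> simp [hk, Finset.card_univ]
      rw [Finset.prod_congr rfl (fun k _ => hc k), auxProdIteMem, hKcard, ← pow_mul]
    · rw [Fintype.card_piFinset]
      have hc : ∀ k, (if k ∈ K then (univ : Finset Bool)
          else ({false} : Finset Bool)).card = (if k ∈ K then 2 else 1) := by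
        intro k
        by_cases hk : k ∈ K <;> simp [hk, Finset.card_univ]
      rw [Finset.prod_congr rfl (fun k _ => hc k), auxProdIteMem, hKcard]
  · rw [Finset.sum_const, Finset.card_powersetCard, Finset.card_univ, Fintype.card_fin,
      smul_eq_mul]

lemma auxQcardBound (m n : ℕ) (hn : 0 < n) :
    (auxQset m n).card
      ≤ ∑ r ∈ Finset.range (m + 1),
          n.choose r * (2 ^ (m * r) * 2 ^ r) * (2 * m.choose (m / 2)) ^ (n - r) := by
  have hsub : auxQset m n ⊆ (Finset.range (m + 1)).biUnion
      (fun r => (auxD m n r).biUnion (fun d => auxFiber d)) := by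
    intro V hV
    obtain ⟨r, hr, d, hd, hfib⟩ := auxCover hn V hV
    exact Finset.mem_biUnion.2 ⟨r, hr, Finset.mem_biUnion.2 ⟨d, hd, hfib⟩⟩
  refine le_trans (Finset.card_le_card hsub) (le_trans Finset.card_biUnion_le
    (Finset.sum_le_sum fun r _ => ?_))
  refine le_trans Finset.card_biUnion_le (le_trans
    (Finset.sum_le_sum (g := fun _ => (2 * m.choose (m / 2)) ^ (n - r))
      (fun d hd => auxFiberCard d hd)) ?_)
  rw [Finset.sum_const, smul_eq_mul]
  exact Nat.mul_le_mul_right _ (auxDcard m n r)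

lemma auxPerJ {m p n : ℕ} (hmp : m ≤ p) (j : Fin m → Fin p) (hj : Function.Injective j) :
    (univ.filter fun W : Fin p → Fin n → Bool => auxQ m n (fun i => W (j i))).card
      ≤ (auxQset m n).card * 2 ^ ((p - m) * n) := by
  have hsub : (univ.filter fun W : Fin p → Fin n → Bool => auxQ m n (fun i => W (j i)))
      ⊆ (auxQset m n).biUnion
          (fun V => univ.filter fun W : Fin p → Fin n → Bool => ∀ i, W (j i) = V i) := by
    intro W hW
    have hq : auxQ m n (fun i => W (j i)) := (Finset.mem_filter.1 hW).2
    refine Finset.mem_biUnion.2 ⟨fun i => W (j i), ?_, ?_⟩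
    · exact Finset.mem_filter.2 ⟨Finset.mem_univ _, hq⟩
    · exact Finset.mem_filter.2 ⟨Finset.mem_univ _, fun i => rfl⟩
  refine le_trans (Finset.card_le_card hsub) (le_trans Finset.card_biUnion_le ?_)
  refine le_trans (Finset.sum_le_sum (g := fun _ => 2 ^ ((p - m) * n)) (fun V _ => ?_)) ?_
  · -- fiber count
    have hsub2 : (univ.filter fun W : Fin p → Fin n → Bool => ∀ i, W (j i) = V i)
        ⊆ Fintype.piFinset (fun a : Fin p =>
            if h : ∃ i, j i = a then ({V h.choose} : Finset (Fin n → Bool)) else univ) := by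
      intro W hW
      have hWa : ∀ i, W (j i) = V i := (Finset.mem_filter.1 hW).2
      apply Fintype.mem_piFinset.2
      intro a
      by_cases h : ∃ i, j i = a
      · rw [dif_pos h, Finset.mem_singleton]
        have hs := h.choose_spec
        simpa [hs] using hWa h.choose
      · rw [dif_neg h]
        exact Finset.mem_univ _
    refine le_trans (Finset.card_le_card hsub2) ?_
    rw [Fintype.card_piFinset]
    have hc : ∀ a : Fin p, (if h : ∃ i, j i = a
        then ({V h.choose} : Finset (Fin n → Bool)) else univ).card
        = (if a ∈ univ.image j then 1 else 2 ^ n) := by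
      intro a
      by_cases h : ∃ i, j i = a
      · rw [dif_pos h, if_pos]
        · simp
        · exact Finset.mem_image.2 ⟨h.choose, Finset.mem_univ _, h.choose_spec⟩
      · rw [dif_neg h, if_neg]
        · simp [Finset.card_univ]
        · intro hmem
          obtain ⟨i, -, hi⟩ := Finset.mem_image.1 hmem
          exact h ⟨i, hi⟩
    rw [Finset.prod_congr rfl (fun a _ => hc a), auxProdIteNotMem]
    rw [Finset.card_image_of_injective _ hj, Finset.card_univ, Fintype.card_fin, ← pow_mul,
      Nat.mul_comm n (p - m)]
  · rw [Finset.sum_const, smul_eq_mul]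

lemma auxPmCount (m p n : ℕ) (hmp : m ≤ p) :
    (univ.filter fun W : Fin p → Fin n → Bool => PmEvent m W).card
      ≤ p ^ m * ((auxQset m n).card * 2 ^ ((p - m) * n)) := by
  have hsub : (univ.filter fun W : Fin p → Fin n → Bool => PmEvent m W)
      ⊆ (univ.filter fun j : Fin m → Fin p => Function.Injective j).biUnion
          (fun j => univ.filter fun W : Fin p → Fin n → Bool => auxQ m n (fun i => W (j i))) := by
    intro W hW
    obtain ⟨j, hjinj, α, hα, hPM⟩ := (Finset.mem_filter.1 hW).2
    refine Finset.mem_biUnion.2 ⟨j, ?_, ?_⟩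
    · exact Finset.mem_filter.2 ⟨Finset.mem_univ _, hjinj⟩
    · exact Finset.mem_filter.2 ⟨Finset.mem_univ _, α, hα, hPM⟩
  refine le_trans (Finset.card_le_card hsub) (le_trans Finset.card_biUnion_le ?_)
  refine le_trans (Finset.sum_le_sum
    (g := fun _ => (auxQset m n).card * 2 ^ ((p - m) * n)) (fun j hj => ?_)) ?_
  · exact auxPerJ hmp j (Finset.mem_filter.1 hj).2
  · rw [Finset.sum_const, smul_eq_mul]
    apply Nat.mul_le_mul_right
    calc (univ.filter fun j : Fin m → Fin p => Function.Injective j).card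
        ≤ (univ : Finset (Fin m → Fin p)).card := Finset.card_le_card (Finset.filter_subset _ _)
      _ = p ^ m := by simp [Finset.card_univ]

lemma auxAssemble {m p n Mm Qc : ℕ} (hm5 : 5 ≤ m) (hmp : m ≤ p) (hpn : p ≤ n)
    (h1 : Mm ≤ p ^ m * (Qc * 2 ^ ((p - m) * n)))
    (h2 : Qc ≤ ∑ r ∈ Finset.range (m + 1),
        n.choose r * (2 ^ (m * r) * 2 ^ r) * (2 * m.choose (m / 2)) ^ (n - r))
    (h58 : 16 * m.choose (m / 2) ≤ 5 * 2 ^ m) :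
    (Mm : ℝ) / 2 ^ (p * n)
      ≤ (n : ℝ) ^ (4 * m) * (((2 * m.choose (m / 2) : ℕ) : ℝ) / 2 ^ m) ^ (n - m) := by
  have hn2 : 2 ≤ n := le_trans (by omega) hpn
  set L : ℕ := 2 * m.choose (m / 2) with hLdef
  set ρ : ℝ := ((L : ℕ) : ℝ) / 2 ^ m with hρdef
  have hρ0 : 0 ≤ ρ := by positivity
  have hLle : L ≤ 2 ^ m := by
    have : 8 * L ≤ 8 * 2 ^ m := by
      calc 8 * L = 16 * m.choose (m / 2) := by rw [hLdef]; ring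
        _ ≤ 5 * 2 ^ m := h58
        _ ≤ 8 * 2 ^ m := by omega
    omega
  have hρ1 : ρ ≤ 1 := by
    rw [hρdef, div_le_one (by positivity)]
    exact_mod_cast le_trans (Nat.cast_le.2 hLle) (by norm_num)
  -- step 1 : divide h1
  have hstep1 : (Mm : ℝ) / 2 ^ (p * n) ≤ (p : ℝ) ^ m * ((Qc : ℝ) / 2 ^ (m * n)) := by
    have hexp : p * n = (p - m) * n + m * n := by
      rw [← Nat.add_mul, Nat.sub_add_cancel hmp]
    have hcast : (Mm : ℝ) ≤ (p : ℝ) ^ m * ((Qc : ℝ) * 2 ^ ((p - m) * n)) := by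
      exact_mod_cast h1
    rw [hexp, pow_add]
    rw [div_le_iff₀ (by positivity)]
    calc (Mm : ℝ) ≤ (p : ℝ) ^ m * ((Qc : ℝ) * 2 ^ ((p - m) * n)) := hcast
      _ = (p : ℝ) ^ m * ((Qc : ℝ) / 2 ^ (m * n)) * (2 ^ ((p - m) * n) * 2 ^ (m * n)) := by
          field_simp
  -- step 2 : the Q bound
  have hterm : ∀ r ∈ Finset.range (m + 1),
      ((n.choose r * (2 ^ (m * r) * 2 ^ r) * L ^ (n - r) : ℕ) : ℝ) / 2 ^ (m * n)
        ≤ (n : ℝ) ^ m * 2 ^ m * ρ ^ (n - m) := by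
    intro r hr
    have hrm : r ≤ m := by
      have := Finset.mem_range.1 hr; omega
    have hrn : r ≤ n := le_trans hrm (le_trans hmp hpn)
    have hexp2 : m * n = m * r + m * (n - r) := by
      rw [← Nat.mul_add, Nat.add_sub_cancel' hrn]
    have heq : ((n.choose r * (2 ^ (m * r) * 2 ^ r) * L ^ (n - r) : ℕ) : ℝ) / 2 ^ (m * n)
        = (n.choose r : ℝ) * 2 ^ r * ρ ^ (n - r) := by
      rw [hexp2, pow_add, hρdef, div_pow, ← pow_mul]
      push_cast
      field_simp
    rw [heq]
    have hb1 : (n.choose r : ℝ) ≤ (n : ℝ) ^ m := by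
      calc (n.choose r : ℝ) ≤ (n : ℝ) ^ r := by exact_mod_cast Nat.choose_le_pow n r
        _ ≤ (n : ℝ) ^ m := by
            apply pow_le_pow_right₀ (by exact_mod_cast Nat.one_le_iff_ne_zero.2 (by omega)) hrm
    have hb2 : (2 : ℝ) ^ r ≤ 2 ^ m := by
      apply pow_le_pow_right₀ (by norm_num) hrm
    have hb3 : ρ ^ (n - r) ≤ ρ ^ (n - m) := by
      apply pow_le_pow_of_le_one hρ0 hρ1
      omega
    have h5 : (0:ℝ) ≤ (2:ℝ) ^ r := by positivity
    exact mul_le_mul (mul_le_mul hb1 hb2 h5 (by positivity)) hb3 (by positivity)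
      (by positivity)
  have hstep2 : (Qc : ℝ) / 2 ^ (m * n) ≤ (m + 1 : ℝ) * ((n : ℝ) ^ m * 2 ^ m * ρ ^ (n - m)) := by
    have hcast2 : (Qc : ℝ) ≤ ∑ r ∈ Finset.range (m + 1),
        ((n.choose r * (2 ^ (m * r) * 2 ^ r) * L ^ (n - r) : ℕ) : ℝ) := by
      exact_mod_cast h2
    calc (Qc : ℝ) / 2 ^ (m * n)
        ≤ (∑ r ∈ Finset.range (m + 1),
            ((n.choose r * (2 ^ (m * r) * 2 ^ r) * L ^ (n - r) : ℕ) : ℝ)) / 2 ^ (m * n) := by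
          exact div_le_div_of_nonneg_right hcast2 (by positivity)
      _ = ∑ r ∈ Finset.range (m + 1),
            ((n.choose r * (2 ^ (m * r) * 2 ^ r) * L ^ (n - r) : ℕ) : ℝ) / 2 ^ (m * n) :=
          Finset.sum_div _ _ _
      _ ≤ ∑ r ∈ Finset.range (m + 1), (n : ℝ) ^ m * 2 ^ m * ρ ^ (n - m) :=
          Finset.sum_le_sum hterm
      _ = (m + 1 : ℝ) * ((n : ℝ) ^ m * 2 ^ m * ρ ^ (n - m)) := by
          rw [Finset.sum_const, Finset.card_range, nsmul_eq_mul]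
          push_cast
          ring
  -- combine
  have hfinal : (p : ℝ) ^ m * ((m + 1 : ℝ) * ((n : ℝ) ^ m * 2 ^ m * ρ ^ (n - m)))
      ≤ (n : ℝ) ^ (4 * m) * ρ ^ (n - m) := by
    have hn1 : (1 : ℝ) ≤ (n : ℝ) := by exact_mod_cast (by omega : 1 ≤ n)
    have e1 : (n : ℝ) ^ (4 * m) = (n:ℝ)^m * ((n:ℝ)^m * ((n:ℝ)^m * (n:ℝ)^m)) := by
      rw [show 4 * m = m + (m + (m + m)) by ring, pow_add, pow_add, pow_add]
    rw [e1]
    have hp : (p : ℝ) ^ m ≤ (n : ℝ) ^ m := by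
      apply pow_le_pow_left₀ (by positivity) (by exact_mod_cast hpn)
    have hm1 : ((m : ℝ) + 1) ≤ (n : ℝ) ^ m := by
      have h2m : (m : ℝ) + 1 ≤ 2 ^ m := by
        exact_mod_cast Nat.succ_le_of_lt (Nat.lt_two_pow_self (n := m))
      calc ((m : ℝ) + 1) ≤ 2 ^ m := h2m
        _ ≤ (n : ℝ) ^ m := by
            apply pow_le_pow_left₀ (by norm_num) (by exact_mod_cast hn2)
    have h2n : (2 : ℝ) ^ m ≤ (n : ℝ) ^ m := by
      apply pow_le_pow_left₀ (by norm_num) (by exact_mod_cast hn2)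
    calc (p : ℝ) ^ m * ((m + 1 : ℝ) * ((n : ℝ) ^ m * 2 ^ m * ρ ^ (n - m)))
        = ((p:ℝ)^m * ((m:ℝ)+1) * 2^m) * ((n:ℝ)^m * ρ ^ (n-m)) := by push_cast; ring
      _ ≤ ((n:ℝ)^m * (n:ℝ)^m * (n:ℝ)^m) * ((n:ℝ)^m * ρ ^ (n-m)) := by
          apply mul_le_mul_of_nonneg_right _ (by positivity)
          apply mul_le_mul (mul_le_mul hp hm1 (by positivity) (by positivity)) h2n
            (by positivity) (by positivity)
      _ = (n:ℝ)^m * ((n:ℝ)^m * ((n:ℝ)^m * (n:ℝ)^m)) * ρ ^ (n-m) := by ring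
  calc (Mm : ℝ) / 2 ^ (p * n) ≤ (p : ℝ) ^ m * ((Qc : ℝ) / 2 ^ (m * n)) := hstep1
    _ ≤ (p : ℝ) ^ m * ((m + 1 : ℝ) * ((n : ℝ) ^ m * 2 ^ m * ρ ^ (n - m))) := by
        apply mul_le_mul_of_nonneg_left hstep2 (by positivity)
    _ ≤ (n : ℝ) ^ (4 * m) * ρ ^ (n - m) := hfinal

lemma auxLog2 : Real.log 2 ≤ 0.75 := by
  rw [show (0.75:ℝ) = 0.15 * 5 by norm_num]
  rw [Real.log_le_iff_le_exp (by norm_num), show (0.15:ℝ) * 5 = (5:ℕ) * 0.15 by ring,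
    Real.exp_nat_mul]
  calc (2:ℝ) ≤ 1.15 ^ (5:ℕ) := by norm_num
    _ ≤ Real.exp 0.15 ^ (5:ℕ) := by
        apply pow_le_pow_left₀ (by norm_num)
        nlinarith [Real.add_one_le_exp (0.15:ℝ)]

lemma auxLog85 : Real.log (8/5) ≤ 0.7 := by
  rw [Real.log_le_iff_le_exp (by norm_num)]
  nlinarith [Real.add_one_le_exp (0.7:ℝ)]

lemma auxLog85' : (0:ℝ) ≤ Real.log (8/5) := Real.log_nonneg (by norm_num)

lemma auxLog85le1 : Real.log (8/5) ≤ 1 := by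
  rw [Real.log_le_iff_le_exp (by norm_num)]
  nlinarith [Real.add_one_le_exp (1:ℝ)]

lemma auxLog58 : Real.log (5/8) = - Real.log (8/5) := by
  rw [show (5/8:ℝ) = ((8/5):ℝ)⁻¹ by norm_num, Real.log_inv]

lemma auxLog1Eps {ε : ℝ} (hε0 : 0 < ε) (hε1 : ε < 1) : ε / 2 ≤ Real.log (1 + ε) := by
  have h1 : Real.log ((1+ε)⁻¹) ≤ (1+ε)⁻¹ - 1 :=
    Real.log_le_sub_one_of_pos (by positivity)
  rw [Real.log_inv] at h1
  have h2 : (1+ε)⁻¹ - 1 = -(ε/(1+ε)) := by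
    field_simp
    ring
  rw [h2] at h1
  have h3 : ε / (1+ε) ≤ Real.log (1+ε) := by linarith
  have h4 : ε / 2 ≤ ε / (1+ε) := by
    apply div_le_div_of_nonneg_left (le_of_lt hε0) (by positivity) (by linarith)
  linarith

lemma auxLogN4 {x : ℝ} (hx : 1 ≤ x) : Real.log x ≤ 4 * x ^ ((1:ℝ)/4) := by
  have h0 : (0:ℝ) < x := by linarith
  have h1 : Real.log x = 4 * Real.log (x ^ ((1:ℝ)/4)) := by
    rw [Real.log_rpow h0]
    ring
  have h2 : Real.log (x ^ ((1:ℝ)/4)) ≤ x ^ ((1:ℝ)/4) - 1 :=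
    Real.log_le_sub_one_of_pos (by positivity)
  rw [h1]
  nlinarith [Real.rpow_nonneg (le_of_lt h0) ((1:ℝ)/4)]

lemma auxLogSix {n : ℕ} (hn : (50000:ℝ) < n) : 6 ≤ Real.log n := by
  rw [Real.le_log_iff_exp_le (by linarith)]
  have h1 : Real.exp 6 = Real.exp 1 ^ (6:ℕ) := by
    rw [← Real.exp_nat_mul]; norm_num
  have h2 : Real.exp 1 ^ (6:ℕ) ≤ 2.7182818286 ^ (6:ℕ) := by
    apply pow_le_pow_left₀ (le_of_lt (Real.exp_pos 1)) (le_of_lt Real.exp_one_lt_d9)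
  calc Real.exp 6 ≤ 2.7182818286 ^ (6:ℕ) := by rw [h1]; exact h2
    _ ≤ 50000 := by norm_num
    _ ≤ n := le_of_lt hn

set_option maxHeartbeats 1000000 in
lemma auxAnalysis (ε : ℝ) (hε0 : 0 < ε) (hε1 : ε < 1 / 100) :
    ∃ N : ℕ, ∀ n : ℕ, N ≤ n → ∀ m : ℕ, 5 ≤ m → (m : ℝ) ≤ ε ^ 2 * n →
      ∀ ρ : ℝ, 0 < ρ → ρ ≤ 5 / 8 → ρ * Real.sqrt m ≤ 2 →
        (n : ℝ) ^ (4 * m) * ρ ^ (n - m) < (5 / 8) ^ n * (1 + ε) ^ n := by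
  refine ⟨⌈(34/ε)^4⌉₊ + 1, fun n hn m hm5 hmε ρ hρ0 hρ58 hρs => ?_⟩
  -- basic positivity facts
  have hm5' : (5:ℝ) ≤ (m:ℝ) := by exact_mod_cast hm5
  have hε2 : ε ^ 2 ≤ 1/10000 := by nlinarith
  have hn50 : (50000:ℝ) < (n:ℝ) := by nlinarith
  have hn0 : (0:ℝ) < (n:ℝ) := by linarith
  have hmn : (m:ℝ) < (n:ℝ) := by nlinarith
  have hmn' : m ≤ n := by exact_mod_cast le_of_lt hmn
  have hq : ((n - m : ℕ) : ℝ) = (n:ℝ) - (m:ℝ) := by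
    push_cast [Nat.cast_sub hmn']
    ring
  have hN : ((34/ε)^4 : ℝ) < (n:ℝ) := by
    have h1 : ((34/ε)^4 : ℝ) ≤ (⌈(34/ε)^4⌉₊ : ℝ) := Nat.le_ceil _
    have h2 : (⌈(34/ε)^4⌉₊ : ℝ) + 1 ≤ (n:ℝ) := by exact_mod_cast hn
    linarith
  -- log target
  have hLpos : (0:ℝ) < (n : ℝ) ^ (4 * m) * ρ ^ (n - m) := by positivity
  have hRpos : (0:ℝ) < ((5:ℝ) / 8) ^ n * (1 + ε) ^ n := by positivity
  rw [← Real.exp_log hLpos, ← Real.exp_log hRpos]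
  apply Real.exp_lt_exp.2
  rw [Real.log_mul (by positivity) (by positivity),
    Real.log_mul (by positivity) (by positivity),
    Real.log_pow, Real.log_pow, Real.log_pow, Real.log_pow]
  push_cast
  set u : ℝ := Real.log n with hu
  set q : ℕ := n - m with hqdef
  have hu0 : 0 ≤ u := Real.log_nonneg (by linarith)
  have hu6 : 6 ≤ u := auxLogSix hn50
  have hq0 : (0:ℝ) ≤ (q:ℝ) := by positivity
  -- goal : 4m * u + q * log ρ < n * log (5/8) + n * log (1+ε)
  by_cases hc : m * m ≤ n
  · -- small m case
    have hmsq : (m:ℝ) * (m:ℝ) ≤ (n:ℝ) := by exact_mod_cast hc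
    have hmsqrt : (m:ℝ) ≤ Real.sqrt n := by
      rw [show (n:ℝ) = Real.sqrt n * Real.sqrt n from (Real.mul_self_sqrt (by positivity)).symm]
        at hmsq
      nlinarith [Real.sqrt_nonneg (n:ℝ), hm5']
    have hrt : Real.sqrt (n:ℝ) = (n:ℝ) ^ ((1:ℝ)/2) := Real.sqrt_eq_rpow _
    have h34 : (n:ℝ) ^ ((1:ℝ)/2) ≤ (n:ℝ) ^ ((3:ℝ)/4) :=
      Real.rpow_le_rpow_of_exponent_le (by linarith) (by norm_num)
    have hquarter : (n:ℝ) ^ ((1:ℝ)/2) * (n:ℝ) ^ ((1:ℝ)/4) = (n:ℝ) ^ ((3:ℝ)/4) := by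
      rw [← Real.rpow_add hn0]; norm_num
    have hujoin : u ≤ 4 * (n:ℝ) ^ ((1:ℝ)/4) := auxLogN4 (by linarith)
    have hA1 : 4 * (m:ℝ) * u ≤ 16 * (n:ℝ) ^ ((3:ℝ)/4) := by
      have : 4 * (m:ℝ) * u ≤ 4 * (n:ℝ) ^ ((1:ℝ)/2) * (4 * (n:ℝ) ^ ((1:ℝ)/4)) := by
        apply mul_le_mul (by rw [← hrt]; linarith) hujoin hu0 (by positivity)
      calc 4 * (m:ℝ) * u ≤ 4 * (n:ℝ) ^ ((1:ℝ)/2) * (4 * (n:ℝ) ^ ((1:ℝ)/4)) := this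
        _ = 16 * ((n:ℝ) ^ ((1:ℝ)/2) * (n:ℝ) ^ ((1:ℝ)/4)) := by ring
        _ = 16 * (n:ℝ) ^ ((3:ℝ)/4) := by rw [hquarter]
    have hA2 : (m:ℝ) * Real.log (8/5) ≤ (n:ℝ) ^ ((3:ℝ)/4) := by
      calc (m:ℝ) * Real.log (8/5) ≤ Real.sqrt n * 1 :=
            mul_le_mul hmsqrt auxLog85le1 auxLog85' (Real.sqrt_nonneg _)
        _ = (n:ℝ) ^ ((1:ℝ)/2) := by rw [mul_one, hrt]
        _ ≤ (n:ℝ) ^ ((3:ℝ)/4) := h34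
    have hA3 : 17 * (n:ℝ) ^ ((3:ℝ)/4) < (ε/2) * n := by
      have hq14 : 34/ε < (n:ℝ) ^ ((1:ℝ)/4) := by
        have h1 : ((34/ε)^4 : ℝ) ^ ((1:ℝ)/4) < (n:ℝ) ^ ((1:ℝ)/4) := by
          apply Real.rpow_lt_rpow (by positivity) hN (by norm_num)
        have h2 : ((34/ε)^4 : ℝ) ^ ((1:ℝ)/4) = 34/ε := by
          rw [← Real.rpow_natCast (34/ε) 4, ← Real.rpow_mul (by positivity)]
          norm_num
        linarith
      have hsplit : (n:ℝ) = (n:ℝ) ^ ((1:ℝ)/4) * (n:ℝ) ^ ((3:ℝ)/4) := by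
        rw [← Real.rpow_add hn0]
        norm_num
      have h5 : (0:ℝ) < (n:ℝ) ^ ((3:ℝ)/4) := by positivity
      have h17 : (17:ℝ) < (ε/2) * ((n:ℝ) ^ ((1:ℝ)/4)) := by
        have h6 := mul_lt_mul_of_pos_left hq14 (show (0:ℝ) < ε/2 by positivity)
        have h7 : (ε/2) * (34/ε) = 17 := by
          field_simp
          ring
        linarith
      calc 17 * (n:ℝ) ^ ((3:ℝ)/4) < ((ε/2) * (n:ℝ) ^ ((1:ℝ)/4)) * (n:ℝ) ^ ((3:ℝ)/4) :=
            mul_lt_mul_of_pos_right h17 h5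
        _ = (ε/2) * ((n:ℝ) ^ ((1:ℝ)/4) * (n:ℝ) ^ ((3:ℝ)/4)) := by ring
        _ = (ε/2) * n := by
            rw [← Real.rpow_add hn0]
            norm_num
    have hB1 : (q:ℝ) * Real.log ρ ≤ (q:ℝ) * Real.log (5/8) := by
      apply mul_le_mul_of_nonneg_left _ hq0
      exact Real.log_le_log hρ0 hρ58
    have hsum : (q:ℝ) + (m:ℝ) = (n:ℝ) := by
      rw [hqdef, hq]; ring
    have hB2 : (ε/2) * n ≤ (n:ℝ) * Real.log (1+ε) := by
      have := auxLog1Eps hε0 (by linarith)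
      calc (ε/2) * n = (n:ℝ) * (ε/2) := by ring
        _ ≤ (n:ℝ) * Real.log (1+ε) := mul_le_mul_of_nonneg_left this (by positivity)
    have hn58 : (n:ℝ) * Real.log (5/8)
        = (q:ℝ) * Real.log (5/8) + (m:ℝ) * Real.log (5/8) := by
      rw [← hsum]; ring
    have hm58 : -((m:ℝ) * Real.log (5/8)) ≤ (n:ℝ) ^ ((3:ℝ)/4) := by
      rw [auxLog58]
      linarith [hA2]
    linarith [hA1, hA3, hB1, hB2, hn58, hm58]
  · -- large m case
    push_neg at hc
    have hcn : (n:ℝ) < (m:ℝ) * (m:ℝ) := by exact_mod_cast hc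
    have hsqm0 : (0:ℝ) < Real.sqrt m := Real.sqrt_pos.2 (by linarith)
    have hρm : ρ ≤ 2 / Real.sqrt m := by
      rw [le_div_iff₀ hsqm0]
      exact hρs
    have hlogρ : Real.log ρ ≤ Real.log 2 - Real.log m / 2 := by
      calc Real.log ρ ≤ Real.log (2 / Real.sqrt m) := Real.log_le_log hρ0 hρm
        _ = Real.log 2 - Real.log (Real.sqrt m) :=
            Real.log_div (by norm_num) (ne_of_gt hsqm0)
        _ = Real.log 2 - Real.log m / 2 := by rw [Real.log_sqrt (by positivity)]
    have hlogm : u ≤ 2 * Real.log m := by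
      calc u ≤ Real.log ((m:ℝ) * m) := Real.log_le_log hn0 (le_of_lt hcn)
        _ = Real.log m + Real.log m := Real.log_mul (by positivity) (by positivity)
        _ = 2 * Real.log m := by ring
    have hlogρ2 : Real.log ρ ≤ Real.log 2 - u / 4 := by linarith
    have hqcb : (q:ℝ) * Real.log ρ ≤ (q:ℝ) * (Real.log 2 - u / 4) :=
      mul_le_mul_of_nonneg_left hlogρ2 hq0
    have hqlb : (1 - 1/10000) * (n:ℝ) ≤ (q:ℝ) := by
      rw [hqdef, hq]
      nlinarith
    have hcneg : Real.log 2 - u / 4 ≤ -3/4 := by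
      have := auxLog2
      linarith
    have hqc2 : (q:ℝ) * (Real.log 2 - u / 4) ≤ ((1 - 1/10000) * n) * (Real.log 2 - u / 4) := by
      apply mul_le_mul_of_nonpos_right hqlb (by linarith)
    have hmu : (m:ℝ) * u ≤ (1/10000) * ((n:ℝ) * u) := by
      have h1 : (m:ℝ) ≤ (1/10000) * n := by nlinarith
      calc (m:ℝ) * u ≤ ((1/10000) * n) * u := mul_le_mul_of_nonneg_right h1 hu0
        _ = (1/10000) * ((n:ℝ) * u) := by ring
    have hnu : 6 * (n:ℝ) ≤ (n:ℝ) * u := by nlinarith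
    have hlog2n : (1 - 1/10000) * (n:ℝ) * Real.log 2 ≤ 0.75 * n := by
      have h2 := Real.log_nonneg (by norm_num : (1:ℝ) ≤ 2)
      nlinarith [auxLog2]
    have hRHS1 : -(0.7) * (n:ℝ) ≤ (n:ℝ) * Real.log (5/8) := by
      rw [auxLog58]
      have h3 : (n:ℝ) * Real.log (8/5) ≤ (n:ℝ) * 0.7 :=
        mul_le_mul_of_nonneg_left auxLog85 hn0.le
      linarith
    have hRHS2 : (0:ℝ) < (n:ℝ) * Real.log (1+ε) := by
      apply mul_pos hn0 (Real.log_pos (by linarith))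
    linarith [hqcb, hqc2, hmu, hnu, hlog2n, hRHS1, hRHS2]


open Finset in
lemma auxMmSub (m p n : ℕ) :
    (MmSet m p n).card ≤ (univ.filter fun W : Fin p → Fin n → Bool => PmEvent m W).card := by
  apply Finset.card_le_card
  intro W hW
  have h := (Finset.mem_filter.1 hW).2
  exact Finset.mem_filter.2 ⟨Finset.mem_univ _, h.2⟩


end Aux

/-- for every `0 < ε < 1/100` there is `N` such that for all `n ≥ N`,
`5 ≤ m ≤ ε² n` and `m ≤ p ≤ n - 1`, `R_m(p,n) < (5/8)^n (1+ε)^n`. -/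
theorem stmt8 :
    ∀ ε : ℝ, 0 < ε → ε < 1 / 100 →
      ∃ N : ℕ, ∀ n ≥ N, ∀ m p : ℕ,
        5 ≤ m → (m : ℝ) ≤ ε ^ 2 * n → m ≤ p → p + 1 ≤ n →
        Rm m p n < (5 / 8) ^ n * (1 + ε) ^ n := by
  intro ε hε0 hε1
  obtain ⟨N, hN⟩ := auxAnalysis ε hε0 hε1
  refine ⟨N, fun n hn m p hm5 hmε hmp hpn1 => ?_⟩
  have hpn : p ≤ n := by omega
  have hn0 : 0 < n := by omega
  set ρ : ℝ := ((2 * m.choose (m / 2) : ℕ) : ℝ) / 2 ^ m with hρdef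
  have hC0 : 0 < m.choose (m / 2) := Nat.choose_pos (by omega)
  have h58 := auxChoose58 m hm5
  have hρ0 : 0 < ρ := by
    apply div_pos _ (by positivity)
    have : (0:ℕ) < 2 * m.choose (m / 2) := by omega
    exact_mod_cast this
  have hρ58 : ρ ≤ 5 / 8 := by
    rw [hρdef, div_le_iff₀ (by positivity)]
    have hcast : ((16 * m.choose (m / 2) : ℕ) : ℝ) ≤ ((5 * 2 ^ m : ℕ) : ℝ) := by
      exact_mod_cast h58
    push_cast at hcast ⊢
    linarith
  have hρs : ρ * Real.sqrt m ≤ 2 := by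
    have hcs := auxChooseSqrt m (by omega)
    rw [hρdef, div_mul_eq_mul_div, div_le_iff₀ (by positivity)]
    push_cast
    nlinarith [Real.sqrt_nonneg (m:ℝ)]
  have key := hN n hn m hm5 hmε ρ hρ0 hρ58 hρs
  apply lt_of_le_of_lt _ key
  have h1 : (MmSet m p n).card
      ≤ p ^ m * ((auxQset m n).card * 2 ^ ((p - m) * n)) :=
    le_trans (auxMmSub m p n) (auxPmCount m p n hmp)
  have h2 := auxQcardBound m n hn0
  have := auxAssemble hm5 hmp hpn h1 h2 h58
  rw [Rm]
  exact this
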